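/- Let D ≥ 1, let ω be a random vector distributed according to the standard Gaussian measure on ℝ^D, and let x, y ∈ ℝ^D be nonzero. Then ℙ( ⟨ω, x⟩ ≥ 0 and ⟨ω, y⟩ ≥ 0 ) = 1/2 − arccos( ⟨x,y⟩/(‖x‖·‖y‖) )/(2π). Consequently, if ω_1,…,ω_P are i.i.d. standard Gaussian vectors in ℝ^D and a(x) ∈ {0,1}^P is the associated sign feature, then E[⟨a(x), a(y)⟩] = P·(1/2 − φ(x,y)/(2π)) and E[ π·(1 − (2/P)·⟨a(x), a(y)⟩) ] = φ(x,y). -/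

import Mathlib

open MeasureTheory ProbabilityTheory

/-- The standard Gaussian measure on `ℝ^D`, the `D`-fold product of `N(0,1)`. -/
noncomputable def stdGaussian (D : ℕ) : Measure (Fin D → ℝ) :=
  Measure.pi fun _ => gaussianReal 0 1

/-- Euclidean inner product on `ℝ^D`. -/
def dotp {D : ℕ} (x y : Fin D → ℝ) : ℝ := ∑ d, x d * y d

/-- Euclidean norm on `ℝ^D`. -/
noncomputable def nrm {D : ℕ} (x : Fin D → ℝ) : ℝ := Real.sqrt (dotp x x)

/-- The angle `φ(x,y) = arccos(⟨x,y⟩/(‖x‖‖y‖))`. -/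
noncomputable def angleφ {D : ℕ} (x y : Fin D → ℝ) : ℝ :=
  Real.arccos (dotp x y / (nrm x * nrm y))

/-- The sign feature `a(x) ∈ {0,1}^P` given hyperplane directions `ω_1,…,ω_P`. -/
noncomputable def signFeat {D P : ℕ} (ω : Fin P → Fin D → ℝ) (x : Fin D → ℝ) :
    Fin P → ℝ :=
  fun ℓ => if 0 ≤ dotp (ω ℓ) x then 1 else 0

namespace Stmt6Aux

open Real Set
open scoped ENNReal NNReal

/-! ### basic helpers -/

lemma nonneg_mul_iff {c t : ℝ} (hc : 0 < c) : 0 ≤ c * t ↔ 0 ≤ t := by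
  constructor
  · intro h
    by_contra ht
    push_neg at ht
    exact absurd h (not_le.2 (mul_neg_of_pos_of_neg hc ht))
  · exact fun h => mul_nonneg hc.le h

lemma measurable_dotp {D : ℕ} (x : Fin D → ℝ) :
    Measurable (fun ω : Fin D → ℝ => dotp ω x) := by
  simp only [dotp]
  exact Finset.measurable_sum _ fun d _ => (measurable_pi_apply d).mul_const _

lemma dotp_comm {D : ℕ} (x y : Fin D → ℝ) : dotp x y = dotp y x := by
  simp only [dotp, mul_comm]

lemma dotp_smul_right {D : ℕ} (c : ℝ) (x y : Fin D → ℝ) :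
    dotp x (c • y) = c * dotp x y := by
  simp only [dotp, Pi.smul_apply, smul_eq_mul, Finset.mul_sum]
  exact Finset.sum_congr rfl fun d _ => by ring

lemma dotp_smul_left {D : ℕ} (c : ℝ) (x y : Fin D → ℝ) :
    dotp (c • x) y = c * dotp x y := by
  rw [dotp_comm, dotp_smul_right, dotp_comm]

/-! ### the 1-dim gaussian density -/

noncomputable def g : ℝ → ℝ := gaussianPDFReal 0 1

lemma g_def (t : ℝ) : g t = (Real.sqrt (2 * π))⁻¹ * Real.exp (-(t ^ 2) / 2) := by
  simp [g, gaussianPDFReal]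

lemma g_nonneg (t : ℝ) : 0 ≤ g t := gaussianPDFReal_nonneg 0 1 t

lemma g_meas : Measurable g := measurable_gaussianPDFReal 0 1

lemma g_int : Integrable g := integrable_gaussianPDFReal 0 1

lemma gaussianReal_wd :
    gaussianReal 0 1 = (volume : Measure ℝ).withDensity (fun t => ENNReal.ofReal (g t)) := by
  rw [gaussianReal_of_var_ne_zero 0 one_ne_zero]
  rfl

lemma gauss_apply (s : Set ℝ) :
    gaussianReal 0 1 s = ENNReal.ofReal (∫ t in s, g t) :=
  gaussianReal_apply_eq_integral 0 one_ne_zero s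

/-! ### stdGaussian as a density over Lebesgue -/

lemma stdGaussian_eq (D : ℕ) :
    stdGaussian D = (volume : Measure (Fin D → ℝ)).withDensity
      (fun ω => ENNReal.ofReal (∏ d, g (ω d))) := by
  rw [_root_.stdGaussian]
  refine Measure.pi_eq fun s hs => ?_
  have hpi : MeasurableSet (Set.pi Set.univ s) := MeasurableSet.univ_pi hs
  rw [withDensity_apply _ hpi]
  have hint : Integrable (fun ω : Fin D → ℝ => ∏ d, (s d).indicator g (ω d)) :=
    Integrable.fintype_prod (fun d => g_int.indicator (hs d))
  have hkey : (Set.pi Set.univ s).indicator (fun ω : Fin D → ℝ => ∏ d, g (ω d))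
      = fun ω => ∏ d, (s d).indicator g (ω d) := by
    funext ω
    by_cases hω : ω ∈ Set.pi Set.univ s
    · rw [Set.indicator_of_mem hω]
      exact Finset.prod_congr rfl fun d _ =>
        (Set.indicator_of_mem (hω d (Set.mem_univ d)) g).symm
    · rw [Set.indicator_of_notMem hω]
      simp only [Set.mem_pi, Set.mem_univ, true_implies, not_forall] at hω
      obtain ⟨d, hd⟩ := hω
      exact (Finset.prod_eq_zero (Finset.mem_univ d) (Set.indicator_of_notMem hd g)).symm
  have hIop : IntegrableOn (fun ω : Fin D → ℝ => ∏ d, g (ω d)) (Set.pi Set.univ s) := by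
    refine (integrable_indicator_iff hpi).mp ?_
    rw [hkey]
    exact hint
  have hnn : 0 ≤ᵐ[(volume : Measure (Fin D → ℝ)).restrict (Set.pi Set.univ s)]
      fun ω : Fin D → ℝ => ∏ d, g (ω d) :=
    Filter.Eventually.of_forall fun ω => Finset.prod_nonneg fun d _ => g_nonneg _
  rw [← ofReal_integral_eq_lintegral_ofReal hIop hnn]
  rw [← integral_indicator hpi, hkey,
    integral_fintype_prod_volume_eq_prod (f := fun (d : Fin D) => (s d).indicator g)]
  rw [ENNReal.ofReal_prod_of_nonneg (fun d _ =>
    integral_nonneg fun t => Set.indicator_nonneg (fun r _ => g_nonneg r) t)]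
  refine Finset.prod_congr rfl fun d _ => ?_
  rw [integral_indicator (hs d)]
  exact (gauss_apply (s d)).symm

/-! ### marginal / cylinder computations -/

lemma pi_eval_preimage {ι : Type*} [Fintype ι] [DecidableEq ι] {α : Type*} [MeasurableSpace α]
    (μ : Measure α) [IsProbabilityMeasure μ] (ℓ : ι) (A : Set α) :
    Measure.pi (fun _ : ι => μ) ((fun ω : ι → α => ω ℓ) ⁻¹' A) = μ A := by
  have : ((fun ω : ι → α => ω ℓ) ⁻¹' A) = Set.pi Set.univ (fun q => if q = ℓ then A else Set.univ) := by
    ext ω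
    simp only [Set.mem_preimage, Set.mem_pi, Set.mem_univ, true_implies]
    constructor
    · intro h q
      split_ifs with hq
      · subst hq; exact h
      · trivial
    · intro h
      have := h ℓ
      simpa using this
  rw [this, Measure.pi_pi]
  have : ∀ q : ι, μ (if q = ℓ then A else Set.univ) = if q = ℓ then μ A else 1 := by
    intro q; split_ifs <;> simp
  simp_rw [this]
  simp

lemma map_pair {D : ℕ} (i j : Fin D) (hij : i ≠ j) :
    (stdGaussian D).map (fun ω => (ω i, ω j))
      = (gaussianReal 0 1).prod (gaussianReal 0 1) := by
  classical
  symm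
  refine Measure.prod_eq fun s t hs ht => ?_
  rw [Measure.map_apply ((measurable_pi_apply i).prodMk (measurable_pi_apply j)) (hs.prod ht)]
  have hpre : (fun ω : Fin D → ℝ => (ω i, ω j)) ⁻¹' (s ×ˢ t)
      = Set.pi Set.univ (fun d => if d = i then s else if d = j then t else Set.univ) := by
    ext ω
    simp only [Set.mem_preimage, Set.mem_prod, Set.mem_pi, Set.mem_univ, true_implies]
    constructor
    · rintro ⟨h1, h2⟩ d
      split_ifs with h h'
      · subst h; exact h1
      · subst h'; exact h2
      · trivial
    · intro h
      refine ⟨?_, ?_⟩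
      · have := h i; simpa using this
      · have := h j; simpa [hij.symm] using this
  rw [hpre, _root_.stdGaussian, Measure.pi_pi]
  have hone : ∀ d ∈ Finset.univ \ ({i, j} : Finset (Fin D)),
      gaussianReal 0 1 (if d = i then s else if d = j then t else Set.univ) = 1 := by
    intro d hd
    simp only [Finset.mem_sdiff, Finset.mem_insert, Finset.mem_singleton] at hd
    push_neg at hd
    rw [if_neg hd.2.1, if_neg hd.2.2]
    simp
  calc (∏ d, gaussianReal 0 1 (if d = i then s else if d = j then t else Set.univ))
      = (∏ d ∈ Finset.univ \ ({i, j} : Finset (Fin D)),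
          gaussianReal 0 1 (if d = i then s else if d = j then t else Set.univ))
        * ∏ d ∈ ({i, j} : Finset (Fin D)),
          gaussianReal 0 1 (if d = i then s else if d = j then t else Set.univ) :=
        (Finset.prod_sdiff (Finset.subset_univ _)).symm
    _ = gaussianReal 0 1 s * gaussianReal 0 1 t := by
        rw [Finset.prod_congr rfl hone, Finset.prod_const_one, one_mul,
          Finset.prod_pair hij, if_pos rfl, if_neg hij.symm, if_pos rfl]

/-! ### the planar wedge computation -/

lemma arc_subset1 {φ : ℝ} (h0 : 0 ≤ φ) (h1 : φ ≤ π) :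
    Icc (φ - π / 2) (π / 2) ⊆
      {θ : ℝ | 0 ≤ Real.cos θ ∧ 0 ≤ Real.cos (θ - φ)} ∩ Ioo (-π) π := by
  have hπ := Real.pi_pos
  rintro θ ⟨ha, hb⟩
  refine ⟨⟨Real.cos_nonneg_of_mem_Icc ⟨by linarith, hb⟩, Real.cos_nonneg_of_mem_Icc ⟨by linarith, by linarith⟩⟩, by constructor <;> [linarith; linarith]⟩

lemma arc_subset2 {φ : ℝ} (h0 : 0 ≤ φ) (h1 : φ ≤ π) :
    {θ : ℝ | 0 ≤ Real.cos θ ∧ 0 ≤ Real.cos (θ - φ)} ∩ Ioo (-π) π ⊆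
      Icc (φ - π / 2) (π / 2) ∪ {φ - 3 * π / 2} := by
  have hπ := Real.pi_pos
  rintro θ ⟨⟨hc1, hc2⟩, hθa, hθb⟩
  have h2 : θ ≤ π / 2 := by
    by_contra h
    push_neg at h
    exact absurd hc1 (not_le.2 (Real.cos_neg_of_pi_div_two_lt_of_lt h (by linarith)))
  have h3 : -(π / 2) ≤ θ := by
    by_contra h
    push_neg at h
    have : Real.cos (-θ) < 0 :=
      Real.cos_neg_of_pi_div_two_lt_of_lt (by linarith) (by linarith)
    rw [Real.cos_neg] at this
    exact absurd hc1 (not_le.2 this)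
  by_cases h4 : φ - π / 2 ≤ θ
  · exact Or.inl ⟨h4, h2⟩
  · push_neg at h4
    right
    have h6 : θ - φ ≤ -(3 * π / 2) := by
      by_contra h
      push_neg at h
      have : Real.cos (-(θ - φ)) < 0 :=
        Real.cos_neg_of_pi_div_two_lt_of_lt (by linarith) (by linarith)
      rw [Real.cos_neg] at this
      exact absurd hc2 (not_le.2 this)
    have : θ = φ - 3 * π / 2 := by linarith
    simp [this]

lemma arc_vol {φ : ℝ} (h0 : 0 ≤ φ) (h1 : φ ≤ π) :
    volume ({θ : ℝ | 0 ≤ Real.cos θ ∧ 0 ≤ Real.cos (θ - φ)} ∩ Ioo (-π) π)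
      = ENNReal.ofReal (π - φ) := by
  refine le_antisymm ?_ ?_
  · calc volume ({θ : ℝ | 0 ≤ Real.cos θ ∧ 0 ≤ Real.cos (θ - φ)} ∩ Ioo (-π) π)
        ≤ volume (Icc (φ - π / 2) (π / 2) ∪ {φ - 3 * π / 2}) :=
          measure_mono (arc_subset2 h0 h1)
      _ ≤ volume (Icc (φ - π / 2) (π / 2)) + volume ({φ - 3 * π / 2} : Set ℝ) :=
          measure_union_le _ _
      _ = ENNReal.ofReal (π - φ) := by
          rw [Real.volume_Icc, Real.volume_singleton, add_zero]
          congr 1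
          ring
  · calc ENNReal.ofReal (π - φ) = volume (Icc (φ - π / 2) (π / 2)) := by
          rw [Real.volume_Icc]
          congr 1
          ring
      _ ≤ volume ({θ : ℝ | 0 ≤ Real.cos θ ∧ 0 ≤ Real.cos (θ - φ)} ∩ Ioo (-π) π) :=
          measure_mono (arc_subset1 h0 h1)

lemma radial_integral : ∫ r in Ioi (0 : ℝ), r * Real.exp (-(r ^ 2) / 2) = 1 := by
  have hderiv : ∀ r ∈ Ici (0 : ℝ),
      HasDerivAt (fun t : ℝ => -Real.exp (-(t ^ 2) / 2)) (r * Real.exp (-(r ^ 2) / 2)) r := by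
    intro r _
    have h1 : HasDerivAt (fun t : ℝ => -(t ^ 2) / 2) (-r) r := by
      have := ((hasDerivAt_pow 2 r).neg).div_const 2
      refine this.congr_deriv ?_
      simp
      ring
    have h2 := h1.exp
    have h3 := h2.neg
    refine h3.congr_deriv ?_
    ring
  have hint : IntegrableOn (fun r : ℝ => r * Real.exp (-(r ^ 2) / 2)) (Ioi 0) := by
    have h := integrable_mul_exp_neg_mul_sq (b := 1 / 2) (by norm_num)
    have : (fun x : ℝ => x * Real.exp (-(1 / 2) * x ^ 2))
        = fun r : ℝ => r * Real.exp (-(r ^ 2) / 2) := by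
      funext x
      congr 1
      ring_nf
    rw [this] at h
    exact h.integrableOn
  have htend : Filter.Tendsto (fun t : ℝ => -Real.exp (-(t ^ 2) / 2)) Filter.atTop (nhds 0) := by
    rw [show (0 : ℝ) = -0 by norm_num]
    refine Filter.Tendsto.neg ?_
    have harg : Filter.Tendsto (fun t : ℝ => -(t ^ 2) / 2) Filter.atTop Filter.atBot := by
      refine Filter.Tendsto.atBot_div_const (by norm_num) ?_
      exact Filter.tendsto_neg_atTop_atBot.comp (Filter.tendsto_pow_atTop two_ne_zero)
    exact Real.tendsto_exp_atBot.comp harg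
  have := integral_Ioi_of_hasDerivAt_of_tendsto
    (((Real.continuous_exp.comp (by continuity)).neg).continuousWithinAt)
    (fun x hx => hderiv x (Set.mem_Ici.mpr (le_of_lt hx))) hint htend
  rw [this]
  norm_num

lemma measurable_Wset (a b : ℝ) :
    MeasurableSet {p : ℝ × ℝ | 0 ≤ p.1 ∧ 0 ≤ a * p.1 + b * p.2} :=
  (measurableSet_le measurable_const measurable_fst).inter
    (measurableSet_le measurable_const
      ((measurable_fst.const_mul a).add (measurable_snd.const_mul b)))

lemma measure_W {φ : ℝ} (h0 : 0 ≤ φ) (h1 : φ ≤ π) :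
    ((gaussianReal 0 1).prod (gaussianReal 0 1))
        {p : ℝ × ℝ | 0 ≤ p.1 ∧ 0 ≤ Real.cos φ * p.1 + Real.sin φ * p.2}
      = ENNReal.ofReal (1 / 2 - φ / (2 * π)) := by
  have hπ := Real.pi_pos
  set W : Set (ℝ × ℝ) := {p : ℝ × ℝ | 0 ≤ p.1 ∧ 0 ≤ Real.cos φ * p.1 + Real.sin φ * p.2} with hWdef
  have hW : MeasurableSet W := measurable_Wset _ _
  set ν := (gaussianReal 0 1).prod (gaussianReal 0 1) with hν
  set Sθ : Set ℝ := {θ : ℝ | 0 ≤ Real.cos θ ∧ 0 ≤ Real.cos (θ - φ)} with hSθdef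
  have hSθ : MeasurableSet Sθ :=
    (measurableSet_le measurable_const Real.measurable_cos).inter
      (measurableSet_le measurable_const (Real.measurable_cos.comp (measurable_id.sub_const φ)))
  -- step 1: the indicator integral equals the measure
  have h2 : ∫ p, W.indicator (fun _ => (1 : ℝ)) p ∂ν = (ν W).toReal := by
    rw [integral_indicator_const (1 : ℝ) hW]
    simp
    rfl
  -- step 2: compute the indicator integral
  have hsmul : ∀ F : ℝ → ℝ, ∫ t, F t ∂(gaussianReal 0 1) = ∫ t, g t * F t := by
    intro F
    rw [gaussianReal_wd]
    rw [show (fun t : ℝ => ENNReal.ofReal (g t)) = (fun t : ℝ => ((g t).toNNReal : ℝ≥0∞)) from rfl]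
    rw [integral_withDensity_eq_integral_smul g_meas.real_toNNReal F]
    congr 1
    funext t
    rw [NNReal.smul_def, Real.coe_toNNReal _ (g_nonneg t), smul_eq_mul]
  have hind_int : Integrable (W.indicator (fun _ => (1 : ℝ))) ν :=
    (integrable_const (1 : ℝ)).indicator hW
  have hgg : Integrable (fun z : ℝ × ℝ => g z.1 * g z.2) ((volume : Measure ℝ).prod volume) :=
    g_int.mul_prod g_int
  have hind_le : ∀ z : ℝ × ℝ, |W.indicator (fun _ => (1 : ℝ)) z| ≤ 1 := by
    intro z
    by_cases h : z ∈ W <;> simp [Set.indicator_of_mem, Set.indicator_of_notMem, h]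
  have hbig_int : Integrable (fun z : ℝ × ℝ => g z.1 * (g z.2 * W.indicator (fun _ => (1 : ℝ)) z))
      ((volume : Measure ℝ).prod volume) := by
    refine hgg.mono' ?_ ?_
    · exact ((g_meas.comp measurable_fst).mul ((g_meas.comp measurable_snd).mul
        (measurable_const.indicator hW))).aestronglyMeasurable
    · refine Filter.Eventually.of_forall fun z => ?_
      have h1 := g_nonneg z.1
      have h2 := g_nonneg z.2
      have h3 := hind_le z
      have h4 : |g z.1 * (g z.2 * W.indicator (fun _ => (1 : ℝ)) z)|
          = g z.1 * (g z.2 * |W.indicator (fun _ => (1 : ℝ)) z|) := by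
        rw [abs_mul, abs_mul, abs_of_nonneg h1, abs_of_nonneg h2]
      rw [Real.norm_eq_abs, h4]
      calc g z.1 * (g z.2 * |W.indicator (fun _ => (1 : ℝ)) z|)
          ≤ g z.1 * (g z.2 * 1) := by
            exact mul_le_mul_of_nonneg_left (mul_le_mul_of_nonneg_left h3 h2) h1
        _ = g z.1 * g z.2 := by ring
  -- iterated integral chain
  have I1 : ∫ p, W.indicator (fun _ => (1 : ℝ)) p ∂ν
      = ∫ x, ∫ y, W.indicator (fun _ => (1 : ℝ)) (x, y) ∂(gaussianReal 0 1) ∂(gaussianReal 0 1) :=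
    integral_prod _ hind_int
  have I2 : (fun x => ∫ y, W.indicator (fun _ => (1 : ℝ)) (x, y) ∂(gaussianReal 0 1))
      = fun x => ∫ y, g y * W.indicator (fun _ => (1 : ℝ)) (x, y) := by
    funext x
    exact hsmul _
  have I3 : ∫ x, (∫ y, g y * W.indicator (fun _ => (1 : ℝ)) (x, y)) ∂(gaussianReal 0 1)
      = ∫ x, g x * ∫ y, g y * W.indicator (fun _ => (1 : ℝ)) (x, y) := hsmul _
  have I4 : (fun x => g x * ∫ y, g y * W.indicator (fun _ => (1 : ℝ)) (x, y))
      = fun x => ∫ y, g x * (g y * W.indicator (fun _ => (1 : ℝ)) (x, y)) := by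
    funext x
    rw [integral_const_mul]
  have hbig_int' : Integrable (fun z : ℝ × ℝ =>
      g z.1 * (g z.2 * W.indicator (fun _ => (1 : ℝ)) (z.1, z.2)))
      ((volume : Measure ℝ).prod volume) := by
    simpa using hbig_int
  have I5 : ∫ x, ∫ y, g x * (g y * W.indicator (fun _ => (1 : ℝ)) (x, y))
      = ∫ z : ℝ × ℝ, g z.1 * (g z.2 * W.indicator (fun _ => (1 : ℝ)) (z.1, z.2))
          ∂((volume : Measure ℝ).prod volume) :=
    integral_integral hbig_int'
  -- polar coordinates
  have hfun : (fun z : ℝ × ℝ => g z.1 * (g z.2 * W.indicator (fun _ => (1 : ℝ)) (z.1, z.2)))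
      = fun p : ℝ × ℝ => W.indicator (fun _ => (1 : ℝ)) p * (g p.1 * g p.2) := by
    funext p
    ring
  have I6 : ∫ p : ℝ × ℝ, W.indicator (fun _ => (1 : ℝ)) p * (g p.1 * g p.2)
      = ∫ p in polarCoord.target,
          p.1 • (W.indicator (fun _ => (1 : ℝ)) (polarCoord.symm p)
            * (g (polarCoord.symm p).1 * g (polarCoord.symm p).2)) :=
    (integral_comp_polarCoord_symm _).symm
  have hptw : ∀ p ∈ Ioi (0 : ℝ) ×ˢ Ioo (-π) π,
      p.1 • (W.indicator (fun _ => (1 : ℝ)) (polarCoord.symm p)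
        * (g (polarCoord.symm p).1 * g (polarCoord.symm p).2))
      = ((2 * π)⁻¹ * (p.1 * Real.exp (-(p.1 ^ 2) / 2)))
          * Sθ.indicator (fun _ => (1 : ℝ)) p.2 := by
    rintro ⟨r, θ⟩ ⟨hr, hθ⟩
    simp only [Set.mem_Ioi] at hr
    rw [polarCoord_symm_apply]
    dsimp only
    have hgg2 : g (r * Real.cos θ) * g (r * Real.sin θ)
        = (2 * π)⁻¹ * Real.exp (-(r ^ 2) / 2) := by
      have hs : Real.sqrt (2 * π) * Real.sqrt (2 * π) = 2 * π :=
        Real.mul_self_sqrt (by positivity)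
      have hsum : -(r * Real.cos θ) ^ 2 / 2 + -(r * Real.sin θ) ^ 2 / 2 = -(r ^ 2) / 2 := by
        nlinarith [Real.sin_sq_add_cos_sq θ]
      rw [g_def, g_def]
      calc (Real.sqrt (2 * π))⁻¹ * Real.exp (-(r * Real.cos θ) ^ 2 / 2)
            * ((Real.sqrt (2 * π))⁻¹ * Real.exp (-(r * Real.sin θ) ^ 2 / 2))
          = (Real.sqrt (2 * π) * Real.sqrt (2 * π))⁻¹
            * Real.exp (-(r * Real.cos θ) ^ 2 / 2 + -(r * Real.sin θ) ^ 2 / 2) := by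
            rw [Real.exp_add, mul_inv]
            ring
        _ = (2 * π)⁻¹ * Real.exp (-(r ^ 2) / 2) := by rw [hs, hsum]
    have hiff : ((r * Real.cos θ, r * Real.sin θ) ∈ W) ↔ θ ∈ Sθ := by
      simp only [hWdef, hSθdef, Set.mem_setOf_eq]
      have e2 : Real.cos φ * (r * Real.cos θ) + Real.sin φ * (r * Real.sin θ)
          = r * Real.cos (θ - φ) := by
        rw [Real.cos_sub]
        ring
      rw [e2]
      exact and_congr (nonneg_mul_iff hr) (nonneg_mul_iff hr)
    have hind2 : W.indicator (fun _ => (1 : ℝ)) (r * Real.cos θ, r * Real.sin θ)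
        = Sθ.indicator (fun _ => (1 : ℝ)) θ := by
      by_cases h : θ ∈ Sθ
      · rw [Set.indicator_of_mem (hiff.mpr h), Set.indicator_of_mem h]
      · rw [Set.indicator_of_notMem (fun hc => h (hiff.mp hc)), Set.indicator_of_notMem h]
    rw [hind2, hgg2, smul_eq_mul]
    ring
  have I7 : ∫ p in polarCoord.target,
      p.1 • (W.indicator (fun _ => (1 : ℝ)) (polarCoord.symm p)
        * (g (polarCoord.symm p).1 * g (polarCoord.symm p).2))
      = ∫ p in Ioi (0 : ℝ) ×ˢ Ioo (-π) π,
          ((2 * π)⁻¹ * (p.1 * Real.exp (-(p.1 ^ 2) / 2))) * Sθ.indicator (fun _ => (1 : ℝ)) p.2 := by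
    rw [polarCoord_target]
    exact setIntegral_congr_fun (measurableSet_Ioi.prod measurableSet_Ioo) hptw
  have I8 : ∫ p in Ioi (0 : ℝ) ×ˢ Ioo (-π) π,
      ((2 * π)⁻¹ * (p.1 * Real.exp (-(p.1 ^ 2) / 2))) * Sθ.indicator (fun _ => (1 : ℝ)) p.2
      = (∫ r in Ioi (0 : ℝ), (2 * π)⁻¹ * (r * Real.exp (-(r ^ 2) / 2)))
        * ∫ θ in Ioo (-π) π, Sθ.indicator (fun _ => (1 : ℝ)) θ := by
    rw [Measure.volume_eq_prod, ← Measure.prod_restrict]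
    exact integral_prod_mul (fun r : ℝ => (2 * π)⁻¹ * (r * Real.exp (-(r ^ 2) / 2)))
      (fun θ : ℝ => Sθ.indicator (fun _ => (1 : ℝ)) θ)
  have I9 : ∫ r in Ioi (0 : ℝ), (2 * π)⁻¹ * (r * Real.exp (-(r ^ 2) / 2)) = (2 * π)⁻¹ := by
    rw [integral_const_mul, radial_integral, mul_one]
  have I10 : ∫ θ in Ioo (-π) π, Sθ.indicator (fun _ => (1 : ℝ)) θ = π - φ := by
    rw [setIntegral_indicator hSθ, setIntegral_const, Set.inter_comm, Measure.real, arc_vol h0 h1,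
      ENNReal.toReal_ofReal (by linarith), smul_eq_mul, mul_one]
  have hval : ∫ p, W.indicator (fun _ => (1 : ℝ)) p ∂ν = 1 / 2 - φ / (2 * π) := by
    rw [I1, I2, I3, I4, I5, hfun, ← Measure.volume_eq_prod, I6, I7, I8, I9, I10]
    field_simp
  calc ν W = ENNReal.ofReal ((ν W).toReal) := (ENNReal.ofReal_toReal (measure_ne_top _ _)).symm
    _ = ENNReal.ofReal (1 / 2 - φ / (2 * π)) := by rw [← h2, hval]


/-! ### consequences for half-lines -/

lemma gauss_Ici : gaussianReal 0 1 (Ici 0) = ENNReal.ofReal (1 / 2) := by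
  have hπ := Real.pi_pos
  have h := measure_W (φ := 0) le_rfl hπ.le
  have hset : {p : ℝ × ℝ | 0 ≤ p.1 ∧ 0 ≤ Real.cos 0 * p.1 + Real.sin 0 * p.2}
      = (Ici (0 : ℝ)) ×ˢ (Set.univ : Set ℝ) := by
    ext p
    simp [Real.cos_zero, Real.sin_zero]
  rw [hset, Measure.prod_prod, measure_univ, mul_one] at h
  rw [h]
  norm_num

lemma gauss_singleton : gaussianReal 0 1 ({0} : Set ℝ) = 0 :=
  gaussianReal_absolutelyContinuous 0 one_ne_zero Real.volume_singleton

lemma gauss_Iic : gaussianReal 0 1 (Iic 0) = ENNReal.ofReal (1 / 2) := by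
  have h1 : gaussianReal 0 1 (Iio 0) = 1 - ENNReal.ofReal (1 / 2) := by
    rw [← Set.compl_Ici, measure_compl measurableSet_Ici (measure_ne_top _ _), gauss_Ici,
      measure_univ]
  have h2 : gaussianReal 0 1 (Iic 0) = gaussianReal 0 1 (Iio 0) + gaussianReal 0 1 {0} := by
    rw [← Set.Iio_union_right]
    exact measure_union (by simp) (measurableSet_singleton 0)
  rw [h2, gauss_singleton, add_zero, h1, ← ENNReal.ofReal_one,
    ← ENNReal.ofReal_sub _ (by norm_num : (0:ℝ) ≤ 1/2)]
  norm_num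

/-! ### the one-dimensional case -/

lemma mul_nonneg_iff_pos_right {a b : ℝ} (hb : 0 < b) : 0 ≤ a * b ↔ 0 ≤ a := by
  rw [mul_comm]
  exact nonneg_mul_iff hb

lemma mul_nonneg_iff_neg_right {a b : ℝ} (hb : b < 0) : 0 ≤ a * b ↔ a ≤ 0 := by
  constructor
  · intro h
    by_contra ha
    push_neg at ha
    exact absurd h (not_le.2 (mul_neg_of_pos_of_neg ha hb))
  · intro h
    nlinarith

lemma prob_D1 (x y : Fin 1 → ℝ) (hx : x ≠ 0) (hy : y ≠ 0) :
    stdGaussian 1 {ω : Fin 1 → ℝ | 0 ≤ dotp ω x ∧ 0 ≤ dotp ω y}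
      = ENNReal.ofReal (1 / 2 - angleφ x y / (2 * π)) := by
  classical
  have hπ := Real.pi_pos
  have hhalf : π / (2 * π) = 1 / 2 := by
    rw [div_eq_iff (by positivity : (2:ℝ) * π ≠ 0)]
    ring
  have hx0 : x 0 ≠ 0 := by
    intro h
    exact hx (funext fun i => by rw [Subsingleton.elim i 0, h, Pi.zero_apply])
  have hy0 : y 0 ≠ 0 := by
    intro h
    exact hy (funext fun i => by rw [Subsingleton.elim i 0, h, Pi.zero_apply])
  have hdot : ∀ ω z : Fin 1 → ℝ, dotp ω z = ω 0 * z 0 := fun ω z => by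
    simp [dotp]
  have hratio : dotp x y / (nrm x * nrm y) = (x 0 * y 0) / (|x 0| * |y 0|) := by
    rw [hdot, nrm, nrm, hdot, hdot, Real.sqrt_mul_self_eq_abs, Real.sqrt_mul_self_eq_abs]
  have hpi1 : ∀ A : Set ℝ, stdGaussian 1 {ω : Fin 1 → ℝ | ω 0 ∈ A} = gaussianReal 0 1 A := by
    intro A
    rw [_root_.stdGaussian]
    exact pi_eval_preimage (gaussianReal 0 1) (0 : Fin 1) A
  rcases lt_or_gt_of_ne hx0 with hx1 | hx1 <;> rcases lt_or_gt_of_ne hy0 with hy1 | hy1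
  · -- x 0 < 0, y 0 < 0
    have hang : angleφ x y = 0 := by
      rw [angleφ, hratio, abs_of_neg hx1, abs_of_neg hy1]
      rw [show -x 0 * -y 0 = x 0 * y 0 by ring,
        div_self (ne_of_gt (mul_pos_of_neg_of_neg hx1 hy1)), Real.arccos_one]
    have hset : {ω : Fin 1 → ℝ | 0 ≤ dotp ω x ∧ 0 ≤ dotp ω y} = {ω : Fin 1 → ℝ | ω 0 ∈ Iic 0} := by
      ext ω
      simp only [Set.mem_setOf_eq, hdot, Set.mem_Iic]
      rw [mul_nonneg_iff_neg_right hx1, mul_nonneg_iff_neg_right hy1, and_self]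
    rw [hset, hpi1, gauss_Iic, hang]
    norm_num
  · -- x 0 < 0, y 0 > 0
    have hang : angleφ x y = π := by
      rw [angleφ, hratio, abs_of_neg hx1, abs_of_pos hy1]
      have hne : -x 0 * y 0 ≠ 0 := ne_of_gt (mul_pos (neg_pos.mpr hx1) hy1)
      rw [show x 0 * y 0 / (-x 0 * y 0) = -1 by field_simp, Real.arccos_neg_one]
    have hset : {ω : Fin 1 → ℝ | 0 ≤ dotp ω x ∧ 0 ≤ dotp ω y}
        = {ω : Fin 1 → ℝ | ω 0 ∈ ({0} : Set ℝ)} := by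
      ext ω
      simp only [Set.mem_setOf_eq, hdot, Set.mem_singleton_iff]
      rw [mul_nonneg_iff_neg_right hx1, mul_nonneg_iff_pos_right hy1]
      exact ⟨fun ⟨h1, h2⟩ => le_antisymm h1 h2, fun h => ⟨h.le, h.ge⟩⟩
    rw [hset, hpi1, gauss_singleton, hang, hhalf]
    norm_num
  · -- x 0 > 0, y 0 < 0
    have hang : angleφ x y = π := by
      rw [angleφ, hratio, abs_of_pos hx1, abs_of_neg hy1]
      have hne : x 0 * -y 0 ≠ 0 := ne_of_gt (mul_pos hx1 (neg_pos.mpr hy1))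
      rw [show x 0 * y 0 / (x 0 * -y 0) = -1 by field_simp, Real.arccos_neg_one]
    have hset : {ω : Fin 1 → ℝ | 0 ≤ dotp ω x ∧ 0 ≤ dotp ω y}
        = {ω : Fin 1 → ℝ | ω 0 ∈ ({0} : Set ℝ)} := by
      ext ω
      simp only [Set.mem_setOf_eq, hdot, Set.mem_singleton_iff]
      rw [mul_nonneg_iff_pos_right hx1, mul_nonneg_iff_neg_right hy1]
      exact ⟨fun ⟨h1, h2⟩ => le_antisymm h2 h1, fun h => ⟨h.ge, h.le⟩⟩
    rw [hset, hpi1, gauss_singleton, hang, hhalf]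
    norm_num
  · -- x 0 > 0, y 0 > 0
    have hang : angleφ x y = 0 := by
      rw [angleφ, hratio, abs_of_pos hx1, abs_of_pos hy1,
        div_self (ne_of_gt (mul_pos hx1 hy1)), Real.arccos_one]
    have hset : {ω : Fin 1 → ℝ | 0 ≤ dotp ω x ∧ 0 ≤ dotp ω y} = {ω : Fin 1 → ℝ | ω 0 ∈ Ici 0} := by
      ext ω
      simp only [Set.mem_setOf_eq, hdot, Set.mem_Ici]
      rw [mul_nonneg_iff_pos_right hx1, mul_nonneg_iff_pos_right hy1, and_self]
    rw [hset, hpi1, gauss_Ici, hang]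
    norm_num

/-! ### Euclidean space bridge -/

noncomputable def toE {D : ℕ} (x : Fin D → ℝ) : EuclideanSpace ℝ (Fin D) :=
  (WithLp.equiv 2 (Fin D → ℝ)).symm x

lemma toE_apply {D : ℕ} (x : Fin D → ℝ) (i : Fin D) : toE x i = x i := rfl

lemma inner_toE {D : ℕ} (a b : Fin D → ℝ) :
    (inner ℝ (toE a) (toE b) : ℝ) = dotp a b := by
  rw [PiLp.inner_apply]
  simp only [RCLike.inner_apply, conj_trivial, toE_apply]
  simp only [dotp, mul_comm]

lemma norm_toE {D : ℕ} (a : Fin D → ℝ) : ‖toE a‖ = nrm a := by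
  rw [norm_eq_sqrt_real_inner, inner_toE]
  rfl

lemma exists_unit_orth {D : ℕ} (hD : 2 ≤ D) (u' : EuclideanSpace ℝ (Fin D)) (hu : ‖u'‖ = 1) :
    ∃ w' : EuclideanSpace ℝ (Fin D), ‖w'‖ = 1 ∧ (inner ℝ u' w' : ℝ) = 0 := by
  obtain ⟨n, rfl⟩ : ∃ n, D = n + 2 := ⟨D - 2, by omega⟩
  have h01 : (0 : Fin (n + 2)) ≠ 1 := by
    intro h
    have := congrArg Fin.val h
    simp at this
  have hcard : Module.finrank ℝ (EuclideanSpace ℝ (Fin (n + 2))) = Fintype.card (Fin (n + 2)) :=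
    finrank_euclideanSpace
  have horth : Orthonormal ℝ (Set.restrict ({0} : Set (Fin (n + 2))) fun _ => u') := by
    rw [orthonormal_iff_ite]
    rintro ⟨i, hi⟩ ⟨j, hj⟩
    simp only [Set.mem_singleton_iff] at hi hj
    subst hi; subst hj
    rw [if_pos rfl]
    simp only [Set.restrict, Set.domRestrict_apply]
    rw [real_inner_self_eq_norm_mul_norm, hu]
    norm_num
  obtain ⟨b, hb⟩ := horth.exists_orthonormalBasis_extension_of_card_eq hcard
  refine ⟨b 1, b.orthonormal.1 1, ?_⟩
  rw [← hb 0 rfl]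
  exact b.orthonormal.2 h01

lemma exists_basis_pair {n : ℕ} (u' w' : EuclideanSpace ℝ (Fin (n + 2)))
    (hu : ‖u'‖ = 1) (hw : ‖w'‖ = 1) (huw : (inner ℝ u' w' : ℝ) = 0) :
    ∃ b : OrthonormalBasis (Fin (n + 2)) ℝ (EuclideanSpace ℝ (Fin (n + 2))),
      b 0 = u' ∧ b 1 = w' := by
  classical
  have h01 : (0 : Fin (n + 2)) ≠ 1 := by
    intro h
    have := congrArg Fin.val h
    simp at this
  set fam : Fin (n + 2) → EuclideanSpace ℝ (Fin (n + 2)) := fun i => if i = 0 then u' else w'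
    with hfam
  have hcard : Module.finrank ℝ (EuclideanSpace ℝ (Fin (n + 2))) = Fintype.card (Fin (n + 2)) :=
    finrank_euclideanSpace
  have horth : Orthonormal ℝ (Set.restrict ({0, 1} : Set (Fin (n + 2))) fam) := by
    rw [orthonormal_iff_ite]
    rintro ⟨i, hi⟩ ⟨j, hj⟩
    simp only [Set.mem_insert_iff, Set.mem_singleton_iff] at hi hj
    have f0 : fam 0 = u' := by rw [hfam]; simp
    have f1 : fam 1 = w' := by rw [hfam]; simp [h01.symm]
    rcases hi with rfl | rfl <;> rcases hj with rfl | rfl <;>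
      simp only [Set.restrict, Set.domRestrict_apply, Subtype.mk_eq_mk, f0, f1, if_pos rfl, if_neg h01,
        if_neg h01.symm]
    · rw [real_inner_self_eq_norm_mul_norm, hu]; norm_num
    · exact huw
    · rw [real_inner_comm]; exact huw
    · rw [real_inner_self_eq_norm_mul_norm, hw]; norm_num
  obtain ⟨b, hb⟩ := horth.exists_orthonormalBasis_extension_of_card_eq hcard
  refine ⟨b, ?_, ?_⟩
  · rw [hb 0 (by simp), hfam]; simp
  · rw [hb 1 (by simp), hfam]; simp [h01.symm]

lemma prob_unit {D : ℕ} (hD : 2 ≤ D) (u v : Fin D → ℝ)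
    (hu : dotp u u = 1) (hv : dotp v v = 1) :
    stdGaussian D {ω : Fin D → ℝ | 0 ≤ dotp ω u ∧ 0 ≤ dotp ω v}
      = ENNReal.ofReal (1 / 2 - Real.arccos (dotp u v) / (2 * π)) := by
  classical
  obtain ⟨n, rfl⟩ : ∃ n, D = n + 2 := ⟨D - 2, by omega⟩
  have h01 : (0 : Fin (n + 2)) ≠ 1 := by
    intro h
    have := congrArg Fin.val h
    simp at this
  set c : ℝ := dotp u v with hc
  set φ : ℝ := Real.arccos c with hφ
  have hu' : ‖toE u‖ = 1 := by rw [norm_toE, nrm, hu, Real.sqrt_one]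
  have hv' : ‖toE v‖ = 1 := by rw [norm_toE, nrm, hv, Real.sqrt_one]
  have hcabs : |c| ≤ 1 := by
    have h := abs_real_inner_le_norm (toE u) (toE v)
    rw [inner_toE, hu', hv'] at h
    simpa using h
  have hφ0 : 0 ≤ φ := Real.arccos_nonneg c
  have hφπ : φ ≤ π := Real.arccos_le_pi c
  have hcos : Real.cos φ = c := Real.cos_arccos (abs_le.mp hcabs).1 (abs_le.mp hcabs).2
  have hsin : Real.sin φ = Real.sqrt (1 - c ^ 2) := by
    rw [hφ]; exact Real.sin_arccos c
  have hsin0 : 0 ≤ Real.sin φ := Real.sin_nonneg_of_nonneg_of_le_pi hφ0 hφπ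
  -- construct the orthonormal pair
  have hz : (inner ℝ (toE v - c • toE u) (toE v - c • toE u) : ℝ) = 1 - c ^ 2 := by
    have e1 : (inner ℝ (toE v) (toE v) : ℝ) = 1 := by rw [inner_toE]; exact hv
    have e2 : (inner ℝ (toE v) (toE u) : ℝ) = c := by rw [inner_toE, dotp_comm]
    have e3 : (inner ℝ (toE u) (toE u) : ℝ) = 1 := by rw [inner_toE]; exact hu
    rw [real_inner_sub_sub_self, real_inner_smul_right, real_inner_smul_left,
      real_inner_smul_right, e1, e2, e3]
    ring
  have hnorm : ‖toE v - c • toE u‖ = Real.sin φ := by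
    rw [norm_eq_sqrt_real_inner, hz, hsin]
  have hwex : ∃ w' : EuclideanSpace ℝ (Fin (n + 2)), ‖w'‖ = 1 ∧ (inner ℝ (toE u) w' : ℝ) = 0 ∧
      toE v = c • toE u + Real.sin φ • w' := by
    by_cases hdeg : Real.sin φ = 0
    · obtain ⟨w', hw1, hw2⟩ := exists_unit_orth (by omega) (toE u) hu'
      refine ⟨w', hw1, hw2, ?_⟩
      have hzero : toE v - c • toE u = 0 := norm_eq_zero.mp (hnorm.trans hdeg)
      rw [hdeg, zero_smul, add_zero]
      exact sub_eq_zero.mp hzero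
    · have hsinpos : 0 < Real.sin φ := lt_of_le_of_ne hsin0 (Ne.symm hdeg)
      refine ⟨(Real.sin φ)⁻¹ • (toE v - c • toE u), ?_, ?_, ?_⟩
      · rw [norm_smul, hnorm, Real.norm_eq_abs, abs_of_pos (inv_pos.mpr hsinpos)]
        field_simp
      · rw [real_inner_smul_right, inner_sub_right, real_inner_smul_right, inner_toE, inner_toE,
          hu, ← hc]
        ring
      · rw [smul_inv_smul₀ hdeg, add_sub_cancel]
  obtain ⟨w', hw1, hw2, hw3⟩ := hwex
  obtain ⟨b, hb0, hb1⟩ := exists_basis_pair (toE u) w' hu' hw1 hw2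
  -- the rotation as a measurable equivalence
  set me := (MeasurableEquiv.toLp 2 (Fin (n + 2) → ℝ)).symm with hme
  set T : (Fin (n + 2) → ℝ) ≃ᵐ (Fin (n + 2) → ℝ) :=
    (me.symm.trans b.measurableEquiv.symm).trans me with hTdef
  have hTcoord : ∀ ξ : Fin (n + 2) → ℝ, toE (T ξ) = b.repr.symm (toE ξ) := fun ξ => rfl
  have hinner_eval : ∀ (ξ : Fin (n + 2) → ℝ) (i : Fin (n + 2)),
      (inner ℝ (b i) (b.repr.symm (toE ξ)) : ℝ) = ξ i := by
    intro ξ i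
    rw [← OrthonormalBasis.repr_apply_apply, LinearIsometryEquiv.apply_symm_apply]
    rfl
  have hdotu : ∀ ξ : Fin (n + 2) → ℝ, dotp (T ξ) u = ξ 0 := by
    intro ξ
    rw [← inner_toE, hTcoord, real_inner_comm, ← hb0, hinner_eval]
  have hdotv : ∀ ξ : Fin (n + 2) → ℝ, dotp (T ξ) v = c * ξ 0 + Real.sin φ * ξ 1 := by
    intro ξ
    rw [← inner_toE, hTcoord, real_inner_comm, hw3, inner_add_left, real_inner_smul_left,
      real_inner_smul_left, ← hb0, ← hb1, hinner_eval, hinner_eval]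
  have hdTT : ∀ ξ : Fin (n + 2) → ℝ, dotp (T ξ) (T ξ) = dotp ξ ξ := by
    intro ξ
    rw [← inner_toE, hTcoord, real_inner_self_eq_norm_mul_norm,
      LinearIsometryEquiv.norm_map, ← real_inner_self_eq_norm_mul_norm, inner_toE]
  have hTpres : MeasurePreserving (⇑T) (volume : Measure (Fin (n + 2) → ℝ)) volume := by
    have h1 := EuclideanSpace.volume_preserving_symm_measurableEquiv_toLp (Fin (n + 2))
    have h2 := b.measurePreserving_measurableEquiv.symm
    exact h1.comp (h2.comp h1.symm)
  -- density invariance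
  have keyG : ∀ z : Fin (n + 2) → ℝ, (∏ d, g (z d))
      = (Real.sqrt (2 * π))⁻¹ ^ (n + 2) * Real.exp (-(dotp z z) / 2) := by
    intro z
    rw [Finset.prod_congr rfl fun d _ => g_def (z d), Finset.prod_mul_distrib,
      Finset.prod_const, ← Real.exp_sum, Finset.card_univ, Fintype.card_fin]
    congr 1
    rw [dotp, ← Finset.sum_div, Finset.sum_neg_distrib, neg_div, neg_div]
    have hsum : (∑ x : Fin (n + 2), z x ^ 2) = ∑ d : Fin (n + 2), z d * z d :=
      Finset.sum_congr rfl fun d _ => pow_two (z d)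
    rw [hsum]
  have hGinv : ∀ ξ : Fin (n + 2) → ℝ, (∏ d, g (T ξ d)) = ∏ d, g (ξ d) := by
    intro ξ
    rw [keyG, keyG, hdTT]
  -- assemble
  have hS : MeasurableSet {ω : Fin (n + 2) → ℝ | 0 ≤ dotp ω u ∧ 0 ≤ dotp ω v} :=
    (measurableSet_le measurable_const (measurable_dotp u)).inter
      (measurableSet_le measurable_const (measurable_dotp v))
  have hS' : MeasurableSet {ξ : Fin (n + 2) → ℝ | 0 ≤ ξ 0 ∧ 0 ≤ c * ξ 0 + Real.sin φ * ξ 1} := by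
    refine MeasurableSet.inter ?_ ?_
    · exact measurableSet_le measurable_const (measurable_pi_apply 0)
    · show MeasurableSet {ξ : Fin (n + 2) → ℝ | 0 ≤ c * ξ 0 + Real.sin φ * ξ 1}
      exact measurableSet_le measurable_const
        (by fun_prop)
  have hpre : ⇑T ⁻¹' {ω : Fin (n + 2) → ℝ | 0 ≤ dotp ω u ∧ 0 ≤ dotp ω v}
      = {ξ : Fin (n + 2) → ℝ | 0 ≤ ξ 0 ∧ 0 ≤ c * ξ 0 + Real.sin φ * ξ 1} := by
    ext ξ
    simp only [Set.mem_preimage, Set.mem_setOf_eq, hdotu, hdotv]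
  rw [stdGaussian_eq, withDensity_apply _ hS,
    ← hTpres.setLIntegral_comp_preimage_emb T.measurableEmbedding]
  simp only [hGinv, hpre]
  rw [← withDensity_apply _ hS', ← stdGaussian_eq]
  have hsplit : {ξ : Fin (n + 2) → ℝ | 0 ≤ ξ 0 ∧ 0 ≤ c * ξ 0 + Real.sin φ * ξ 1}
      = (fun ξ : Fin (n + 2) → ℝ => (ξ 0, ξ 1)) ⁻¹'
        {p : ℝ × ℝ | 0 ≤ p.1 ∧ 0 ≤ Real.cos φ * p.1 + Real.sin φ * p.2} := by
    ext ξ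
    simp [hcos]
  rw [hsplit, ← Measure.map_apply ((measurable_pi_apply 0).prodMk (measurable_pi_apply 1))
    (measurable_Wset _ _), map_pair 0 1 h01, measure_W hφ0 hφπ]

/-! ### the main probability computation -/

lemma dotp_pos_self {D : ℕ} (x : Fin D → ℝ) (hx : x ≠ 0) : 0 < dotp x x := by
  have hex : ∃ d, x d ≠ 0 := by
    by_contra h
    push_neg at h
    exact hx (funext fun d => h d)
  obtain ⟨d, hd⟩ := hex
  rw [dotp]
  exact Finset.sum_pos' (fun i _ => mul_self_nonneg _)
    ⟨d, Finset.mem_univ d, mul_self_pos.mpr hd⟩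

lemma prob_main {D : ℕ} (hD : 1 ≤ D) (x y : Fin D → ℝ) (hx : x ≠ 0) (hy : y ≠ 0) :
    stdGaussian D {ω : Fin D → ℝ | 0 ≤ dotp ω x ∧ 0 ≤ dotp ω y}
      = ENNReal.ofReal (1 / 2 - angleφ x y / (2 * π)) := by
  rcases eq_or_lt_of_le hD with h1 | h2
  · obtain rfl : D = 1 := h1.symm
    exact prob_D1 x y hx hy
  · have hD2 : 2 ≤ D := h2
    have hpx : 0 < dotp x x := dotp_pos_self x hx
    have hpy : 0 < dotp y y := dotp_pos_self y hy
    have hnx : 0 < nrm x := Real.sqrt_pos.mpr hpx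
    have hny : 0 < nrm y := Real.sqrt_pos.mpr hpy
    have hxx : nrm x * nrm x = dotp x x := Real.mul_self_sqrt hpx.le
    have hyy : nrm y * nrm y = dotp y y := Real.mul_self_sqrt hpy.le
    set u := (nrm x)⁻¹ • x with hu
    set v := (nrm y)⁻¹ • y with hv
    have huu : dotp u u = 1 := by
      rw [hu, dotp_smul_left, dotp_smul_right, ← hxx]
      field_simp
    have hvv : dotp v v = 1 := by
      rw [hv, dotp_smul_left, dotp_smul_right, ← hyy]
      field_simp
    have hset : {ω : Fin D → ℝ | 0 ≤ dotp ω x ∧ 0 ≤ dotp ω y}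
        = {ω : Fin D → ℝ | 0 ≤ dotp ω u ∧ 0 ≤ dotp ω v} := by
      ext ω
      simp only [Set.mem_setOf_eq, hu, hv, dotp_smul_right]
      rw [nonneg_mul_iff (inv_pos.mpr hnx), nonneg_mul_iff (inv_pos.mpr hny)]
    have hang : angleφ x y = Real.arccos (dotp u v) := by
      rw [angleφ]
      congr 1
      rw [hu, hv, dotp_smul_left, dotp_smul_right]
      field_simp
    rw [hset, prob_unit hD2 u v huu hvv, hang]

end Stmt6Aux

/-- Random-hyperplane identity: for a standard Gaussian `ω` in `ℝ^D`,
`ℙ(⟨ω,x⟩ ≥ 0 ∧ ⟨ω,y⟩ ≥ 0) = 1/2 − φ(x,y)/(2π)`; consequently, for `P` i.i.d. standard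
Gaussian directions, `E⟨a(x),a(y)⟩ = P(1/2 − φ/(2π))` and
`E[π(1 − (2/P)⟨a(x),a(y)⟩)] = φ(x,y)`. -/
theorem stmt_6 {D : ℕ} (hD : 1 ≤ D) (x y : Fin D → ℝ) (hx : x ≠ 0) (hy : y ≠ 0) :
    stdGaussian D {ω | 0 ≤ dotp ω x ∧ 0 ≤ dotp ω y} =
      ENNReal.ofReal (1 / 2 - angleφ x y / (2 * Real.pi)) ∧
    ∀ P : ℕ, 1 ≤ P →
      (∫ ω, (∑ ℓ, signFeat ω x ℓ * signFeat ω y ℓ)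
          ∂(Measure.pi fun _ : Fin P => stdGaussian D)) =
        P * (1 / 2 - angleφ x y / (2 * Real.pi)) ∧
      (∫ ω, Real.pi * (1 - (2 / (P : ℝ)) * ∑ ℓ, signFeat ω x ℓ * signFeat ω y ℓ)
          ∂(Measure.pi fun _ : Fin P => stdGaussian D)) =
        angleφ x y := by
  classical
  have hπ := Real.pi_pos
  have hmain := Stmt6Aux.prob_main hD x y hx hy
  have hφ0 : 0 ≤ angleφ x y := Real.arccos_nonneg _
  have hφπ : angleφ x y ≤ Real.pi := Real.arccos_le_pi _
  have hval0 : 0 ≤ 1 / 2 - angleφ x y / (2 * Real.pi) := by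
    have hhalf : angleφ x y / (2 * Real.pi) ≤ 1 / 2 := by
      rw [div_le_iff₀ (by positivity)]
      linarith
    linarith
  haveI hprob : IsProbabilityMeasure (stdGaussian D) := by
    rw [_root_.stdGaussian]; infer_instance
  refine ⟨hmain, fun P hP => ?_⟩
  haveI : IsProbabilityMeasure (Measure.pi fun _ : Fin P => stdGaussian D) := inferInstance
  set A : Set (Fin D → ℝ) := {ω' : Fin D → ℝ | 0 ≤ dotp ω' x ∧ 0 ≤ dotp ω' y} with hA
  have hAmeas : MeasurableSet A :=
    (measurableSet_le measurable_const (Stmt6Aux.measurable_dotp x)).inter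
      (measurableSet_le measurable_const (Stmt6Aux.measurable_dotp y))
  have hterm : ∀ ℓ : Fin P, (fun ω : Fin P → Fin D → ℝ => signFeat ω x ℓ * signFeat ω y ℓ)
      = Set.indicator ((fun ω : Fin P → Fin D → ℝ => ω ℓ) ⁻¹' A) (fun _ => (1 : ℝ)) := by
    intro ℓ
    funext ω
    simp only [signFeat, Set.indicator_apply, Set.mem_preimage, hA, Set.mem_setOf_eq]
    by_cases h1 : 0 ≤ dotp (ω ℓ) x <;> by_cases h2 : 0 ≤ dotp (ω ℓ) y <;> simp [h1, h2]
  have hint : ∀ ℓ : Fin P, Integrable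
      (fun ω : Fin P → Fin D → ℝ => signFeat ω x ℓ * signFeat ω y ℓ)
      (Measure.pi fun _ : Fin P => stdGaussian D) := by
    intro ℓ
    rw [hterm ℓ]
    exact (integrable_const 1).indicator ((measurable_pi_apply ℓ) hAmeas)
  have hper : ∀ ℓ : Fin P, (∫ ω, signFeat ω x ℓ * signFeat ω y ℓ
      ∂(Measure.pi fun _ : Fin P => stdGaussian D)) = 1 / 2 - angleφ x y / (2 * Real.pi) := by
    intro ℓ
    rw [hterm ℓ, integral_indicator_const (1 : ℝ) ((measurable_pi_apply ℓ) hAmeas),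
      smul_eq_mul, mul_one, Measure.real, Stmt6Aux.pi_eval_preimage (stdGaussian D) ℓ A, hmain,
      ENNReal.toReal_ofReal hval0]
  have hsum : (∫ ω, (∑ ℓ, signFeat ω x ℓ * signFeat ω y ℓ)
      ∂(Measure.pi fun _ : Fin P => stdGaussian D))
      = P * (1 / 2 - angleφ x y / (2 * Real.pi)) := by
    rw [integral_finset_sum Finset.univ (fun ℓ _ => hint ℓ),
      Finset.sum_congr rfl (fun ℓ _ => hper ℓ), Finset.sum_const, Finset.card_univ,
      Fintype.card_fin, nsmul_eq_mul]
  refine ⟨hsum, ?_⟩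
  have hPne : (P : ℝ) ≠ 0 := Nat.cast_ne_zero.mpr (by omega)
  have hintS : Integrable (fun ω : Fin P → Fin D → ℝ => ∑ ℓ, signFeat ω x ℓ * signFeat ω y ℓ)
      (Measure.pi fun _ : Fin P => stdGaussian D) :=
    integrable_finset_sum _ (fun ℓ _ => hint ℓ)
  have hsplit : (fun ω : Fin P → Fin D → ℝ =>
      Real.pi * (1 - (2 / (P : ℝ)) * ∑ ℓ, signFeat ω x ℓ * signFeat ω y ℓ))
      = fun ω => Real.pi - (Real.pi * (2 / (P : ℝ)))
          * ∑ ℓ, signFeat ω x ℓ * signFeat ω y ℓ := by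
    funext ω
    ring
  rw [hsplit, integral_sub (integrable_const _) (hintS.const_mul _), integral_const,
    integral_const_mul, hsum]
  simp only [measure_univ, probReal_univ, ENNReal.toReal_one, smul_eq_mul, one_mul]
  field_simp
  ring
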